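/- Let A be a commutative ring, and let 𝔭 be a minimal prime of A. If A is 1-deep with respect to a family Φ of finitely generated admissible ideals (i.e., A has no nonzero I-torsion for any admissible I), then 𝔭 contains no admissible ideal. -/

import Mathlib

/-- A ring with constructible supports (a `Φ`-ring): a commutative ring together with a
family of finitely generated ideals (the *admissible* ideals) containing the unit ideal,
stable under products, and such that any finitely generated ideal containing an admissible
ideal is admissible. -/
structure PhiRing (A : Type*) [CommRing A] where
  adm : Set (Ideal A)
  fg_of_mem : ∀ I ∈ adm, I.FG
  top_mem : ⊤ ∈ adm
  mul_mem : ∀ I ∈ adm, ∀ J ∈ adm, I * J ∈ adm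
  enlarge_mem : ∀ I ∈ adm, ∀ J : Ideal A, J.FG → I ≤ J → J ∈ adm

/-- The multiplicative set of elements of `A` generating an admissible ideal. -/
def PhiRing.S {A : Type*} [CommRing A] (Φ : PhiRing A) : Submonoid A where
  carrier := {a : A | Ideal.span {a} ∈ Φ.adm}
  one_mem' := by
    show Ideal.span {(1 : A)} ∈ Φ.adm
    rw [Ideal.span_singleton_one]
    exact Φ.top_mem
  mul_mem' := by
    intro a b ha hb
    show Ideal.span {a * b} ∈ Φ.adm
    rw [← Ideal.span_singleton_mul_span_singleton]
    exact Φ.mul_mem _ ha _ hb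

/-- `A` is `Φ`-local if (it is local and) every admissible ideal is invertible;
in a local ring, an ideal is invertible iff it is generated by a single nonzerodivisor. -/
def PhiRing.IsPhiLocal {A : Type*} [CommRing A] (Φ : PhiRing A) : Prop :=
  ∀ I ∈ Φ.adm, ∃ a ∈ nonZeroDivisors A, I = Ideal.span {a}

/-- Let `A` be a commutative ring and `𝔭` a minimal prime of `A`.  If `A` is `1`-deep with
respect to a family `Φ` of finitely generated admissible ideals (i.e. `A` has no nonzero
`I`-torsion for any admissible `I`), then `𝔭` contains no admissible ideal. -/
theorem PhiRing.not_le_minimalPrime_of_oneDeep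
    {A : Type*} [CommRing A] (Φ : PhiRing A)
    (hdeep : ∀ I ∈ Φ.adm, ∀ a : A, (∃ n : ℕ, ∀ x ∈ I ^ n, x * a = 0) → a = 0)
    (𝔭 : Ideal A) (h𝔭 : 𝔭 ∈ minimalPrimes A) :
    ∀ I ∈ Φ.adm, ¬ I ≤ 𝔭 := by
  
  classical
  intro I hI hle
  haveI : 𝔭.IsPrime := h𝔭.1.1
  set L := Localization 𝔭.primeCompl with hL
  have hrad : I.map (algebraMap A L) ≤ (⊥ : Ideal L).radical := by
    rw [Ideal.map_le_iff_le_comap]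
    intro x hx
    have hm : algebraMap A L x ∈ IsLocalRing.maximalIdeal L :=
      (IsLocalization.AtPrime.to_map_mem_maximal_iff L 𝔭 x).mpr (hle hx)
    have : algebraMap A L x ∈ (⊥ : Ideal L).radical := by
      have h := IsLocalization.AtPrime.radical_map_of_mem_minimalPrimes (A := L) 𝔭 ⊥ h𝔭
      rw [Ideal.map_bot, IsLocalization.AtPrime.map_eq_maximalIdeal] at h
      rw [h]; exact hm
    simpa [Ideal.mem_comap, ← mem_nilradical, nilradical] using this
  obtain ⟨n, hn⟩ := Ideal.exists_pow_le_of_le_radical_of_fg hrad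
    ((Φ.fg_of_mem I hI).map (algebraMap A L))
  -- so (I^n).map = 0
  have hzero : (I ^ n).map (algebraMap A L) = ⊥ := by
    rw [Ideal.map_pow]
    exact le_bot_iff.mp hn
  -- I^n is f.g.
  obtain ⟨t, ht⟩ := Submodule.FG.pow (Φ.fg_of_mem I hI) n
  -- for each generator, find an annihilating element of primeCompl
  have key : ∀ g ∈ t, ∃ m : 𝔭.primeCompl, (m : A) * g = 0 := by
    intro g hg
    have : algebraMap A L g = 0 := by
      have : g ∈ I ^ n := by rw [← ht]; exact Ideal.subset_span hg
      have := Ideal.mem_map_of_mem (algebraMap A L) this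
      rwa [hzero, Ideal.mem_bot] at this
    exact (IsLocalization.map_eq_zero_iff 𝔭.primeCompl L g).mp this
  choose m hm using key
  set s : A := t.attach.prod (fun g => (m g.1 g.2 : A)) with hs
  have hsnot : s ∈ 𝔭.primeCompl :=
    Submonoid.prod_mem _ (fun g _ => (m g.1 g.2).2)
  have hkill : ∀ x ∈ I ^ n, x * s = 0 := by
    intro x hx
    rw [← ht] at hx
    refine Submodule.span_induction (p := fun x _ => x * s = 0) ?_ (by simp) ?_ ?_ hx
    · intro g hg
      obtain ⟨i, hit, rfl⟩ : ∃ i ∈ t, i = g := ⟨g, hg, rfl⟩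
      have : s = (m i hit : A) * (t.attach.erase ⟨i, hit⟩).prod (fun g => (m g.1 g.2 : A)) := by
        rw [hs, ← Finset.prod_erase_mul _ _ (Finset.mem_attach t ⟨i, hit⟩)]
        ring
      rw [this, ← mul_assoc, mul_comm i, hm i hit, zero_mul]
    · intro a b _ _ ha hb; rw [add_mul, ha, hb, add_zero]
    · intro a x _ hx; rw [smul_eq_mul, mul_assoc, hx, mul_zero]
  have : s = 0 := hdeep I hI s ⟨n, hkill⟩
  exact hsnot (this ▸ 𝔭.zero_mem)
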